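/- Let k ≥ l ≥ 0 and let π : ℕ → (Fin n → ℝ) be a (k,l)-lasso sequence, i.e., there exists α ∈ ℝ with π (k+1+j) i = α + π (l+j) i for all j ≥ 0 and all i. Then for every TDLTL formula φ in positive normal form over dimension n, π ⊨_{k,l} φ (bounded lasso satisfaction at position 0) if and only if π ⊨ φ. -/
import Mathlib


/-- Comparison symbol `∼ ∈ {≥, >}`. -/
inductive Cmp where
  | ge : Cmp
  | gt : Cmp

/-- The relation on `ℝ` denoted by a comparison symbol. -/
def Cmp.rel : Cmp → ℝ → ℝ → Prop
  | .ge => (· ≥ ·)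
  | .gt => (· > ·)

/-- TDLTL formulas in positive normal form over dimension `n`. -/
inductive TDLTL (n : ℕ) where
  | top : TDLTL n
  | bot : TDLTL n
  | atom (i j : Fin n) (c : Cmp) (α : ℝ) : TDLTL n
  | natom (i j : Fin n) (c : Cmp) (α : ℝ) : TDLTL n
  | and (φ₁ φ₂ : TDLTL n) : TDLTL n
  | or (φ₁ φ₂ : TDLTL n) : TDLTL n
  | next (φ : TDLTL n) : TDLTL n
  | untl (φ₁ φ₂ : TDLTL n) : TDLTL n
  | release (φ₁ φ₂ : TDLTL n) : TDLTL n

/-- The suffix `π[m..]` of a sequence. -/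
def shift {n : ℕ} (π : ℕ → Fin n → ℝ) (m : ℕ) : ℕ → Fin n → ℝ :=
  fun t => π (m + t)

/-- (Unbounded) TDLTL satisfaction `π ⊨ φ`. -/
def Sat {n : ℕ} : TDLTL n → (ℕ → Fin n → ℝ) → Prop
  | .top, _ => True
  | .bot, _ => False
  | .atom i j c α, π => c.rel (π 0 i - π 0 j) α
  | .natom i j c α, π => ¬ c.rel (π 0 i - π 0 j) α
  | .and φ₁ φ₂, π => Sat φ₁ π ∧ Sat φ₂ π
  | .or φ₁ φ₂, π => Sat φ₁ π ∨ Sat φ₂ π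
  | .next φ, π => Sat φ (shift π 1)
  | .untl φ₁ φ₂, π => ∃ j : ℕ, Sat φ₂ (shift π j) ∧ ∀ t < j, Sat φ₁ (shift π t)
  | .release φ₁ φ₂, π =>
      (∀ j : ℕ, Sat φ₂ (shift π j)) ∨
      (∃ j : ℕ, Sat φ₁ (shift π j) ∧ ∀ t ≤ j, Sat φ₂ (shift π t))

/-- Bounded lasso satisfaction `sat(m, φ)` over a `(k,l)`-lasso `π`. -/
def BSat {n : ℕ} (π : ℕ → Fin n → ℝ) (k l : ℕ) : TDLTL n → ℕ → Prop
  | .top, _ => True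
  | .bot, _ => False
  | .atom i j c α, m => c.rel (π m i - π m j) α
  | .natom i j c α, m => ¬ c.rel (π m i - π m j) α
  | .and φ₁ φ₂, m => BSat π k l φ₁ m ∧ BSat π k l φ₂ m
  | .or φ₁ φ₂, m => BSat π k l φ₁ m ∨ BSat π k l φ₂ m
  | .next φ, m => if m < k then BSat π k l φ (m + 1) else BSat π k l φ l
  | .untl φ₁ φ₂, m =>
      (∃ j : ℕ, m ≤ j ∧ j ≤ k ∧ BSat π k l φ₂ j ∧
        ∀ t : ℕ, m ≤ t → t < j → BSat π k l φ₁ t) ∨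
      (∃ j : ℕ, l ≤ j ∧ j < m ∧ BSat π k l φ₂ j ∧
        (∀ t : ℕ, m ≤ t → t ≤ k → BSat π k l φ₁ t) ∧
        (∀ t : ℕ, l ≤ t → t < j → BSat π k l φ₁ t))
  | .release φ₁ φ₂, m =>
      (∀ j : ℕ, min m l ≤ j → j ≤ k → BSat π k l φ₂ j) ∨
      (∃ j : ℕ, m ≤ j ∧ j ≤ k ∧ BSat π k l φ₁ j ∧
        ∀ t : ℕ, m ≤ t → t ≤ j → BSat π k l φ₂ t) ∨
      (∃ j : ℕ, l ≤ j ∧ j < m ∧ BSat π k l φ₁ j ∧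
        (∀ t : ℕ, m ≤ t → t ≤ k → BSat π k l φ₂ t) ∧
        (∀ t : ℕ, l ≤ t → t ≤ j → BSat π k l φ₂ t))

lemma shift_shift {n : ℕ} (π : ℕ → Fin n → ℝ) (a b : ℕ) :
    shift (shift π a) b = shift π (a + b) := by
  funext t i; simp [shift, Nat.add_assoc]

lemma sat_add_const {n : ℕ} (α : ℝ) :
    ∀ (φ : TDLTL n) (π : ℕ → Fin n → ℝ), Sat φ (fun t i => α + π t i) ↔ Sat φ π := by
  intro φ
  induction φ with
  | top => intro π; exact Iff.rfl
  | bot => intro π; exact Iff.rfl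
  | atom i j c a =>
    intro π
    show Cmp.rel c ((α + π 0 i) - (α + π 0 j)) a ↔ Cmp.rel c (π 0 i - π 0 j) a
    rw [add_sub_add_left_eq_sub]
  | natom i j c a =>
    intro π
    show ¬ Cmp.rel c ((α + π 0 i) - (α + π 0 j)) a ↔ ¬ Cmp.rel c (π 0 i - π 0 j) a
    rw [add_sub_add_left_eq_sub]
  | and φ₁ φ₂ ih1 ih2 => intro π; exact and_congr (ih1 π) (ih2 π)
  | or φ₁ φ₂ ih1 ih2 => intro π; exact or_congr (ih1 π) (ih2 π)
  | next φ ih => intro π; exact ih (shift π 1)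
  | untl φ₁ φ₂ ih1 ih2 =>
    intro π
    exact exists_congr fun j => and_congr (ih2 (shift π j))
      (forall_congr' fun t => forall_congr' fun _ => ih1 (shift π t))
  | release φ₁ φ₂ ih1 ih2 =>
    intro π
    exact or_congr (forall_congr' fun j => ih2 (shift π j))
      (exists_congr fun j => and_congr (ih1 (shift π j))
        (forall_congr' fun t => forall_congr' fun _ => ih2 (shift π t)))

lemma bmain {n : ℕ} (k l : ℕ) (hlk : l ≤ k) (π : ℕ → Fin n → ℝ)
    (hlasso : ∃ α : ℝ, ∀ (j : ℕ) (i : Fin n), π (k + 1 + j) i = α + π (l + j) i) :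
    ∀ φ : TDLTL n, ∀ m, m ≤ k → (BSat π k l φ m ↔ Sat φ (shift π m)) := by
  classical
  have per : ∀ (d : ℕ) (φ : TDLTL n),
      Sat φ (shift π (k+1+d)) ↔ Sat φ (shift π (l+d)) := by
    obtain ⟨α, hα⟩ := hlasso
    intro d φ
    have h : shift π (k+1+d) = fun t i => α + shift π (l+d) t i := by
      funext t i
      have hh := hα (d + t) i
      simp only [shift]
      rw [show k+1+d+t = k+1+(d+t) from by omega, show l+d+t = l+(d+t) from by omega]
      exact hh
    rw [h]; exact sat_add_const α φ (shift π (l+d))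
  have satRed : ∀ t, k < t → ∀ φ : TDLTL n,
      ∃ t₀, l ≤ t₀ ∧ t₀ ≤ k ∧ (Sat φ (shift π t₀) ↔ Sat φ (shift π t)) := by
    intro t
    induction t using Nat.strong_induction_on with
    | _ t ih =>
      intro ht φ
      have hper := per (t - (k+1)) φ
      rw [show k+1+(t-(k+1)) = t from by omega] at hper
      by_cases hc : l + (t - (k+1)) ≤ k
      · exact ⟨l + (t - (k+1)), by omega, hc, hper.symm⟩
      · obtain ⟨t₀, h1, h2, h3⟩ := ih (l + (t - (k+1))) (by omega) (by omega) φ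
        exact ⟨t₀, h1, h2, h3.trans hper.symm⟩
  intro φ
  induction φ with
  | top => intro m hm; simp [BSat, Sat]
  | bot => intro m hm; simp [BSat, Sat]
  | atom i j c a =>
    intro m hm
    show Cmp.rel c (π m i - π m j) a ↔ Cmp.rel c (shift π m 0 i - shift π m 0 j) a
    simp [shift]
  | natom i j c a =>
    intro m hm
    show ¬ Cmp.rel c (π m i - π m j) a ↔ ¬ Cmp.rel c (shift π m 0 i - shift π m 0 j) a
    simp [shift]
  | and φ₁ φ₂ ih1 ih2 => intro m hm; exact and_congr (ih1 m hm) (ih2 m hm)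
  | or φ₁ φ₂ ih1 ih2 => intro m hm; exact or_congr (ih1 m hm) (ih2 m hm)
  | next φ ih =>
    intro m hm
    simp only [BSat, Sat, shift_shift]
    by_cases hc : m < k
    · rw [if_pos hc]
      exact ih (m+1) (by omega)
    · rw [if_neg hc]
      have hmk : m = k := by omega
      subst hmk
      exact (ih l hlk).trans (per 0 φ).symm
  | untl φ₁ φ₂ ih1 ih2 =>
    intro m hm
    simp only [BSat, Sat, shift_shift]
    constructor
    · rintro (⟨j, hmj, hjk, h2, h1⟩ | ⟨j, hlj, hjm, h2, h1a, h1b⟩)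
      · refine ⟨j - m, ?_, ?_⟩
        · rw [show m + (j - m) = j from by omega]
          exact (ih2 j hjk).mp h2
        · intro t ht
          exact (ih1 (m+t) (by omega)).mp (h1 (m+t) (by omega) (by omega))
      · refine ⟨(k+1-m) + (j-l), ?_, ?_⟩
        · rw [show m + ((k+1-m)+(j-l)) = k+1+(j-l) from by omega, per,
              show l + (j-l) = j from by omega]
          exact (ih2 j (by omega)).mp h2
        · intro t ht
          by_cases hc : m + t ≤ k
          · exact (ih1 (m+t) hc).mp (h1a (m+t) (by omega) hc)
          · rw [show m + t = k+1+(m+t-(k+1)) from by omega, per]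
            exact (ih1 (l+(m+t-(k+1))) (by omega)).mp (h1b _ (by omega) (by omega))
    · rintro ⟨j', h2, h1⟩
      have hex : ∃ j, Sat φ₂ (shift π (m + j)) := ⟨j', h2⟩
      have hspec : Sat φ₂ (shift π (m + Nat.find hex)) := Nat.find_spec hex
      have hle : Nat.find hex ≤ j' := Nat.find_min' hex h2
      set j₀ := Nat.find hex with hj₀def
      have h1' : ∀ t < j₀, Sat φ₁ (shift π (m + t)) := fun t ht => h1 t (by omega)
      by_cases hc : m + j₀ ≤ k
      · refine Or.inl ⟨m + j₀, by omega, hc, (ih2 _ hc).mpr hspec, ?_⟩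
        intro t hmt htj
        refine (ih1 t (by omega)).mpr ?_
        rw [show t = m + (t - m) from by omega]
        exact h1' (t - m) (by omega)
      · push_neg at hc
        have hbound : m + j₀ < k+1 + (k+1-l) := by
          by_contra hb
          push_neg at hb
          apply Nat.find_min hex (show j₀ - (k+1-l) < j₀ from by omega)
          have hp := per (m + (j₀ - (k+1-l)) - l) φ₂
          rw [show k+1+(m + (j₀ - (k+1-l)) - l) = m + j₀ from by omega,
              show l + (m + (j₀ - (k+1-l)) - l) = m + (j₀ - (k+1-l)) from by omega] at hp
          exact hp.mp hspec
        set j₂ := m + j₀ - (k+1-l) with hj₂def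
        have hj₂l : l ≤ j₂ := by omega
        have hj₂k : j₂ ≤ k := by omega
        have hsat2 : Sat φ₂ (shift π j₂) := by
          have hp := per (j₂ - l) φ₂
          rw [show k+1+(j₂-l) = m + j₀ from by omega,
              show l + (j₂ - l) = j₂ from by omega] at hp
          exact hp.mp hspec
        have hB2 : BSat π k l φ₂ j₂ := (ih2 j₂ hj₂k).mpr hsat2
        have hA : ∀ t, m ≤ t → t ≤ k → BSat π k l φ₁ t := by
          intro t hmt htk
          refine (ih1 t htk).mpr ?_
          rw [show t = m + (t - m) from by omega]
          exact h1' (t - m) (by omega)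
        have hB : ∀ t, l ≤ t → t < j₂ → BSat π k l φ₁ t := by
          intro t hlt htj
          refine (ih1 t (by omega)).mpr ?_
          have hp := per (t - l) φ₁
          rw [show l + (t - l) = t from by omega] at hp
          rw [← hp, show k+1+(t-l) = m + (t + (k+1-l) - m) from by omega]
          exact h1' (t + (k+1-l) - m) (by omega)
        by_cases hc2 : m ≤ j₂
        · exact Or.inl ⟨j₂, hc2, hj₂k, hB2, fun t hmt htj => hA t hmt (by omega)⟩
        · exact Or.inr ⟨j₂, hj₂l, by omega, hB2, hA, hB⟩
  | release φ₁ φ₂ ih1 ih2 =>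
    intro m hm
    simp only [BSat, Sat, shift_shift]
    constructor
    · rintro (h | ⟨j, hmj, hjk, h1, h2⟩ | ⟨j, hlj, hjm, h1, h2a, h2b⟩)
      · refine Or.inl fun j => ?_
        by_cases hc : m + j ≤ k
        · exact (ih2 (m+j) hc).mp (h (m+j) (by omega) hc)
        · obtain ⟨t₀, ht₀l, ht₀k, hiff⟩ := satRed (m+j) (by omega) φ₂
          exact hiff.mp ((ih2 t₀ ht₀k).mp (h t₀ (by omega) ht₀k))
      · refine Or.inr ⟨j - m, ?_, ?_⟩
        · rw [show m + (j - m) = j from by omega]; exact (ih1 j hjk).mp h1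
        · intro t ht
          exact (ih2 (m+t) (by omega)).mp (h2 (m+t) (by omega) (by omega))
      · refine Or.inr ⟨(k+1-m)+(j-l), ?_, ?_⟩
        · rw [show m + ((k+1-m)+(j-l)) = k+1+(j-l) from by omega, per,
              show l + (j-l) = j from by omega]
          exact (ih1 j (by omega)).mp h1
        · intro t ht
          by_cases hc : m + t ≤ k
          · exact (ih2 (m+t) hc).mp (h2a (m+t) (by omega) hc)
          · rw [show m + t = k+1+(m+t-(k+1)) from by omega, per]
            exact (ih2 (l+(m+t-(k+1))) (by omega)).mp (h2b _ (by omega) (by omega))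
    · rintro (h | ⟨j', h1, h2⟩)
      · refine Or.inl fun j hminj hjk => ?_
        by_cases hc : m ≤ j
        · refine (ih2 j hjk).mpr ?_
          rw [show j = m + (j - m) from by omega]
          exact h (j - m)
        · have hlj : l ≤ j := by omega
          refine (ih2 j hjk).mpr ?_
          have hp := per (j - l) φ₂
          rw [show l + (j - l) = j from by omega] at hp
          rw [← hp, show k+1+(j-l) = m + (j + (k+1-l) - m) from by omega]
          exact h _
      · have hex : ∃ j, Sat φ₁ (shift π (m + j)) := ⟨j', h1⟩
        have hspec : Sat φ₁ (shift π (m + Nat.find hex)) := Nat.find_spec hex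
        have hle : Nat.find hex ≤ j' := Nat.find_min' hex h1
        set j₀ := Nat.find hex with hj₀def
        have h2' : ∀ t ≤ j₀, Sat φ₂ (shift π (m + t)) := fun t ht => h2 t (by omega)
        by_cases hc : m + j₀ ≤ k
        · refine Or.inr (Or.inl ⟨m + j₀, by omega, hc, (ih1 _ hc).mpr hspec, ?_⟩)
          intro t hmt htj
          refine (ih2 t (by omega)).mpr ?_
          rw [show t = m + (t - m) from by omega]
          exact h2' (t - m) (by omega)
        · push_neg at hc
          have hbound : m + j₀ < k+1 + (k+1-l) := by
            by_contra hb
            push_neg at hb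
            apply Nat.find_min hex (show j₀ - (k+1-l) < j₀ from by omega)
            have hp := per (m + (j₀ - (k+1-l)) - l) φ₁
            rw [show k+1+(m + (j₀ - (k+1-l)) - l) = m + j₀ from by omega,
                show l + (m + (j₀ - (k+1-l)) - l) = m + (j₀ - (k+1-l)) from by omega] at hp
            exact hp.mp hspec
          set j₂ := m + j₀ - (k+1-l) with hj₂def
          have hj₂l : l ≤ j₂ := by omega
          have hj₂k : j₂ ≤ k := by omega
          have hsat1 : Sat φ₁ (shift π j₂) := by
            have hp := per (j₂ - l) φ₁
            rw [show k+1+(j₂-l) = m + j₀ from by omega,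
                show l + (j₂ - l) = j₂ from by omega] at hp
            exact hp.mp hspec
          have hB1 : BSat π k l φ₁ j₂ := (ih1 j₂ hj₂k).mpr hsat1
          have hA : ∀ t, m ≤ t → t ≤ k → BSat π k l φ₂ t := by
            intro t hmt htk
            refine (ih2 t htk).mpr ?_
            rw [show t = m + (t - m) from by omega]
            exact h2' (t - m) (by omega)
          have hB : ∀ t, l ≤ t → t ≤ j₂ → BSat π k l φ₂ t := by
            intro t hlt htj
            refine (ih2 t (by omega)).mpr ?_
            have hp := per (t - l) φ₂
            rw [show l + (t - l) = t from by omega] at hp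
            rw [← hp, show k+1+(t-l) = m + (t + (k+1-l) - m) from by omega]
            exact h2' (t + (k+1-l) - m) (by omega)
          by_cases hc2 : m ≤ j₂
          · exact Or.inr (Or.inl ⟨j₂, hc2, hj₂k, hB1, fun t hmt htj => hA t hmt (by omega)⟩)
          · exact Or.inr (Or.inr ⟨j₂, hj₂l, by omega, hB1, hA, hB⟩)

/-- For a `(k,l)`-lasso sequence `π` (with `l ≤ k`), bounded lasso
satisfaction at position `0` coincides with unbounded satisfaction. -/
theorem bounded_lasso_sat_iff_sat {n : ℕ} (k l : ℕ) (hlk : l ≤ k)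
    (π : ℕ → Fin n → ℝ)
    (hlasso : ∃ α : ℝ, ∀ (j : ℕ) (i : Fin n), π (k + 1 + j) i = α + π (l + j) i) :
    ∀ φ : TDLTL n, BSat π k l φ 0 ↔ Sat φ π := by
  intro φ
  have h := bmain k l hlk π hlasso φ 0 (Nat.zero_le k)
  have hs : shift π 0 = π := by funext t i; simp [shift]
  rwa [hs] at h
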